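/- Let φ be a real-valued characteristic function with 0 ≤ φ(ω) ≤ 1, let E[|h|²] = 1 for a nonconstant nonnegative random variable |h|, c > 0, and θ, ω > 0. Then the faded deflection coefficient D_f(ω) = 2(E|h|)² φ(ω)²(1−cos(ωθ)) / (1 − (E|h|)² φ(ω)² + c) satisfies D_f(ω) < D(ω) := 2 φ(ω)²(1−cos(ωθ)) / (1 − φ(ω)² + c) whenever φ(ω)(1−cos(ωθ)) > 0, because (E|h|)² < 1 by Jensen's inequality (with equality iff |h| is deterministic). -/

import Mathlib

open Real MeasureTheory

theorem stmt17 {Ω : Type*} [MeasurableSpace Ω] (P : Measure Ω) [IsProbabilityMeasure P]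
    (h : Ω → ℝ) (hmeas : Measurable h) (hnonneg : ∀ x, 0 ≤ h x)
    (hL2 : MemLp h 2 P)
    (hnorm : (∫ x, (h x)^2 ∂P) = 1)
    (hnonconst : ¬ (∀ᵐ x ∂P, h x = ∫ y, h y ∂P))
    (φ : ℝ → ℝ) (hφrange : ∀ ω, φ ω ∈ Set.Icc (0:ℝ) 1)
    (c θ ω : ℝ) (hc : 0 < c) (hθ : 0 < θ) (hω : 0 < ω)
    (hpos : 0 < φ ω * (1 - Real.cos (ω * θ))) :
    (∫ x, h x ∂P)^2 < 1 ∧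
    2 * (∫ x, h x ∂P)^2 * (φ ω)^2 * (1 - Real.cos (ω * θ)) /
        (1 - (∫ x, h x ∂P)^2 * (φ ω)^2 + c) <
      2 * (φ ω)^2 * (1 - Real.cos (ω * θ)) / (1 - (φ ω)^2 + c) := by
  set m := ∫ x, h x ∂P with hm
  -- variance is positive
  have hvar : ProbabilityTheory.variance h P = 1 - m ^ 2 := by
    rw [ProbabilityTheory.variance_eq_sub hL2]
    simp only [Pi.pow_apply] at *
    rw [hnorm]
  have hvarpos : 0 < ProbabilityTheory.variance h P := by
    rcases lt_or_eq_of_le (ProbabilityTheory.variance_nonneg h P) with hv | hv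
    · exact hv
    · exfalso
      apply hnonconst
      have hev : ProbabilityTheory.evariance h P = 0 := by
        have := hL2.evariance_lt_top
        rw [ProbabilityTheory.variance] at hv
        exact (ENNReal.toReal_eq_zero_iff _).mp hv.symm |>.resolve_right this.ne
      exact (ProbabilityTheory.evariance_eq_zero_iff hmeas.aemeasurable).mp hev
  have hm2 : m ^ 2 < 1 := by linarith [hvar ▸ hvarpos]
  refine ⟨hm2, ?_⟩
  have hmnn : 0 ≤ m := integral_nonneg hnonneg
  obtain ⟨hφ0, hφ1⟩ := hφrange ω
  have hφpos : 0 < φ ω := by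
    rcases lt_or_eq_of_le hφ0 with h1 | h1
    · exact h1
    · exfalso; rw [← h1] at hpos; simp at hpos
  have hcos : 0 < 1 - Real.cos (ω * θ) := by
    rcases mul_pos_iff.mp hpos with ⟨_, h2⟩ | ⟨h1, _⟩
    · exact h2
    · linarith
  have hb : 0 < (φ ω) ^ 2 := by positivity
  have hb1 : (φ ω) ^ 2 ≤ 1 := by nlinarith
  have halt : m ^ 2 * (φ ω) ^ 2 < (φ ω) ^ 2 := by nlinarith
  have hd1 : 0 < 1 - m ^ 2 * (φ ω) ^ 2 + c := by nlinarith
  have hd2 : 0 < 1 - (φ ω) ^ 2 + c := by nlinarith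
  rw [div_lt_div_iff₀ hd1 hd2]
  nlinarith [mul_pos (mul_pos (mul_pos hb hcos) (sub_pos.mpr hm2)) (show (0:ℝ) < 1 + c by linarith)]
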